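/- For any Blotto data and any positive solution γ* of Equation (2), the following evaluation holds: Σ_{i=1}^n v^A_i · ∫_{[0,∞)} F_{B*_i}(x) dμ_{A*_i}(x) = Σ_{i∈Ω_A(γ*)} v^A_i (1 − γ* v^B_i/(2 v^A_i)) + Σ_{i∉Ω_A(γ*)} (v^A_i)²/(2 γ* v^B_i). -/

import Mathlib

open Finset MeasureTheory

/-- Normalized battlefield values: `nv w i = w i / ∑_j w j`. -/
noncomputable def nv {n : ℕ} (w : Fin n → ℝ) (i : Fin n) : ℝ := w i / ∑ j, w j

/-- The set `Ω_A(γ) = {i : v^A_i / v^B_i > γ}`. -/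
noncomputable def OmegaA {n : ℕ} (wA wB : Fin n → ℝ) (γ : ℝ) : Finset (Fin n) :=
  Finset.univ.filter fun i => γ < nv wA i / nv wB i

/-- Equation (2). -/
def Eq2 {n : ℕ} (XA XB : ℝ) (wA wB : Fin n → ℝ) (γ : ℝ) : Prop :=
  XB * γ / XA =
    (γ ^ 2 * ∑ i ∈ OmegaA wA wB γ, (nv wB i) ^ 2 / nv wA i
        + ∑ i ∈ (OmegaA wA wB γ)ᶜ, nv wA i) /
    (∑ i ∈ OmegaA wA wB γ, nv wB i
        + (γ ^ 2)⁻¹ * ∑ i ∈ (OmegaA wA wB γ)ᶜ, (nv wA i) ^ 2 / nv wB i)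

/-- The multiplier λ*_A associated with a solution γ of Equation (2). -/
noncomputable def lamA {n : ℕ} (XB : ℝ) (wA wB : Fin n → ℝ) (γ : ℝ) : ℝ :=
  γ ^ 2 / (2 * XB) * ∑ i ∈ OmegaA wA wB γ, (nv wB i) ^ 2 / nv wA i
    + 1 / (2 * XB) * ∑ i ∈ (OmegaA wA wB γ)ᶜ, nv wA i

/-- The multiplier λ*_B associated with a solution γ of Equation (2). -/
noncomputable def lamB {n : ℕ} (XA : ℝ) (wA wB : Fin n → ℝ) (γ : ℝ) : ℝ :=
  1 / (2 * XA) * ∑ i ∈ OmegaA wA wB γ, nv wB i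
    + 1 / (2 * γ ^ 2 * XA) * ∑ i ∈ (OmegaA wA wB γ)ᶜ, (nv wA i) ^ 2 / nv wB i

/-- The uniform-type CDF `F_{A*_i}`. -/
noncomputable def FAstar {n : ℕ} (XA XB : ℝ) (wA wB : Fin n → ℝ) (γ : ℝ) (i : Fin n)
    (x : ℝ) : ℝ :=
  if x < 0 then 0
  else if i ∈ OmegaA wA wB γ then
    min (x * lamB XA wA wB γ / nv wB i) 1
  else
    min (1 - nv wA i * lamB XA wA wB γ / (nv wB i * lamA XB wA wB γ)
          + x * lamB XA wA wB γ / nv wB i) 1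

/-- The uniform-type CDF `F_{B*_i}`. -/
noncomputable def FBstar {n : ℕ} (XA XB : ℝ) (wA wB : Fin n → ℝ) (γ : ℝ) (i : Fin n)
    (x : ℝ) : ℝ :=
  if x < 0 then 0
  else if i ∈ OmegaA wA wB γ then
    min (1 - nv wB i * lamA XB wA wB γ / (nv wA i * lamB XA wA wB γ)
          + x * lamA XB wA wB γ / nv wA i) 1
  else
    min (x * lamA XB wA wB γ / nv wA i) 1

lemma nv_pos {n : ℕ} (hn : 1 ≤ n) (w : Fin n → ℝ) (hw : ∀ i, 0 < w i) (i : Fin n) :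
    0 < nv w i := by
  have : (0:ℝ) < ∑ j, w j := by
    apply Finset.sum_pos (fun j _ => hw j)
    exact Finset.univ_nonempty_iff.mpr ⟨⟨0, hn⟩⟩
  exact div_pos (hw i) this

lemma lamA_pos {n : ℕ} (hn : 1 ≤ n) (XB : ℝ) (hXB : 0 < XB) (wA wB : Fin n → ℝ)
    (hwA : ∀ i, 0 < wA i) (hwB : ∀ i, 0 < wB i) (γ : ℝ) (hγ : 0 < γ) :
    0 < lamA XB wA wB γ := by
  have hvA := nv_pos hn wA hwA
  have hvB := nv_pos hn wB hwB
  unfold lamA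
  rcases (OmegaA wA wB γ).eq_empty_or_nonempty with h | h
  · have h2 : (OmegaA wA wB γ)ᶜ = Finset.univ := by simp [h]
    apply add_pos_of_nonneg_of_pos
    · exact mul_nonneg (by positivity)
        (Finset.sum_nonneg fun i _ => (div_pos (pow_pos (hvB i) 2) (hvA i)).le)
    · apply mul_pos (by positivity)
      rw [h2]
      exact Finset.sum_pos (fun i _ => hvA i) (Finset.univ_nonempty_iff.mpr ⟨⟨0, hn⟩⟩)
  · apply add_pos_of_pos_of_nonneg
    · exact mul_pos (by positivity)
        (Finset.sum_pos (fun i _ => div_pos (pow_pos (hvB i) 2) (hvA i)) h)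
    · exact mul_nonneg (by positivity) (Finset.sum_nonneg fun i _ => (hvA i).le)

lemma lamB_pos {n : ℕ} (hn : 1 ≤ n) (XA : ℝ) (hXA : 0 < XA) (wA wB : Fin n → ℝ)
    (hwA : ∀ i, 0 < wA i) (hwB : ∀ i, 0 < wB i) (γ : ℝ) (hγ : 0 < γ) :
    0 < lamB XA wA wB γ := by
  have hvA := nv_pos hn wA hwA
  have hvB := nv_pos hn wB hwB
  unfold lamB
  rcases (OmegaA wA wB γ).eq_empty_or_nonempty with h | h
  · have h2 : (OmegaA wA wB γ)ᶜ = Finset.univ := by simp [h]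
    apply add_pos_of_nonneg_of_pos
    · exact mul_nonneg (by positivity) (Finset.sum_nonneg fun i _ => (hvB i).le)
    · apply mul_pos (by positivity)
      rw [h2]
      exact Finset.sum_pos (fun i _ => div_pos (pow_pos (hvA i) 2) (hvB i))
        (Finset.univ_nonempty_iff.mpr ⟨⟨0, hn⟩⟩)
  · apply add_pos_of_pos_of_nonneg
    · exact mul_pos (by positivity) (Finset.sum_pos (fun i _ => hvB i) h)
    · exact mul_nonneg (by positivity)
        (Finset.sum_nonneg fun i _ => (div_pos (pow_pos (hvA i) 2) (hvB i)).le)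

lemma lam_ratio {n : ℕ} (XA XB : ℝ) (hXA : 0 < XA) (hXB : 0 < XB) (wA wB : Fin n → ℝ)
    (γ : ℝ) (hγ : 0 < γ) (hlB : 0 < lamB XA wA wB γ)
    (heq : Eq2 XA XB wA wB γ) :
    lamA XB wA wB γ = γ * lamB XA wA wB γ := by
  set S1 := ∑ i ∈ OmegaA wA wB γ, (nv wB i) ^ 2 / nv wA i with hS1
  set S2 := ∑ i ∈ (OmegaA wA wB γ)ᶜ, nv wA i with hS2
  set S3 := ∑ i ∈ OmegaA wA wB γ, nv wB i with hS3
  set S4 := ∑ i ∈ (OmegaA wA wB γ)ᶜ, (nv wA i) ^ 2 / nv wB i with hS4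
  have hN : γ ^ 2 * S1 + S2 = 2 * XB * lamA XB wA wB γ := by
    unfold lamA; rw [← hS1, ← hS2]; field_simp; try ring
  have hD : S3 + (γ ^ 2)⁻¹ * S4 = 2 * XA * lamB XA wA wB γ := by
    unfold lamB; rw [← hS3, ← hS4]; field_simp; try ring
  unfold Eq2 at heq
  rw [← hS1, ← hS2, ← hS3, ← hS4, hN, hD] at heq
  have hDne : 2 * XA * lamB XA wA wB γ ≠ 0 :=
    ne_of_gt (mul_pos (mul_pos two_pos hXA) hlB)
  have h1 : XB * γ / XA * (2 * XA * lamB XA wA wB γ) = 2 * XB * lamA XB wA wB γ := by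
    rw [heq, div_mul_cancel₀ _ hDne]
  field_simp at h1
  have h2 : XA * ((2 * XB) * (γ * lamB XA wA wB γ)) = XA * ((2 * XB) * lamA XB wA wB γ) := by
    linear_combination (2 * XA * XB) * h1
  have h3 := mul_left_cancel₀ hXA.ne' h2
  exact (mul_left_cancel₀ (by positivity : (2:ℝ) * XB ≠ 0) h3).symm

lemma integral_mem {n : ℕ} (XA XB : ℝ) (wA wB : Fin n → ℝ) (γ : ℝ) (i : Fin n)
    (hvA : 0 < nv wA i) (hvB : 0 < nv wB i)
    (hlA : 0 < lamA XB wA wB γ) (hlB : 0 < lamB XA wA wB γ)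
    (hrel : lamA XB wA wB γ = γ * lamB XA wA wB γ) (hγ : 0 < γ)
    (hi : i ∈ OmegaA wA wB γ)
    (μ : Measure ℝ) [IsProbabilityMeasure μ]
    (hcdf : ∀ x, μ (Set.Iic x) = ENNReal.ofReal (FAstar XA XB wA wB γ i x)) :
    ∫ x in Set.Ici (0:ℝ), FBstar XA XB wA wB γ i x ∂μ
      = 1 - γ * nv wB i / (2 * nv wA i) := by
  set vA := nv wA i
  set vB := nv wB i
  set lA := lamA XB wA wB γ
  set lB := lamB XA wA wB γ
  set r := vB / lB with hr
  set c := lB / vB with hc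
  have hr0 : 0 < r := div_pos hvB hlB
  have hc0 : 0 < c := div_pos hlB hvB
  have hcr : c * r = 1 := by rw [hc, hr]; field_simp
  -- γ < vA / vB from membership
  have hγlt : γ < vA / vB := by
    simpa [OmegaA] using hi
  have hμ : μ = ENNReal.ofReal c • volume.restrict (Set.Ioc 0 r) := by
    refine Measure.ext_of_Iic μ _ (fun x => ?_)
    rw [hcdf, Measure.smul_apply, Measure.restrict_apply measurableSet_Iic,
      Set.inter_comm, Set.Ioc_inter_Iic, smul_eq_mul]
    rcases lt_or_ge x 0 with hx | hx
    · have : min r x < 0 := lt_of_le_of_lt (min_le_right _ _) hx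
      rw [Real.volume_Ioc]
      simp [FAstar, hx, ENNReal.ofReal_eq_zero.mpr, this.le]
    · rw [Real.volume_Ioc, ← ENNReal.ofReal_mul hc0.le]
      have hFA : FAstar XA XB wA wB γ i x = min (x * lB / vB) 1 := by
        simp [FAstar, not_lt.mpr hx, hi]; rfl
      rw [hFA]
      congr 1
      have : c * (min r x - 0) = min (c * r) (c * x) := by
        rw [sub_zero, mul_min_of_nonneg _ _ hc0.le]
      rw [this, hcr]
      rw [min_comm]
      congr 1
      rw [hc]; field_simp
  rw [hμ]
  rw [Measure.restrict_smul, integral_smul_measure,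
    Measure.restrict_restrict measurableSet_Ici,
    (by exact Set.inter_eq_self_of_subset_right (fun x hx => le_of_lt hx.1) :
      Set.Ici (0:ℝ) ∩ Set.Ioc 0 r = Set.Ioc 0 r)]
  rw [ENNReal.toReal_ofReal hc0.le]
  have hcongr : ∫ x in Set.Ioc 0 r, FBstar XA XB wA wB γ i x
      = ∫ x in Set.Ioc 0 r, (1 - vB * lA / (vA * lB) + x * (lA / vA)) := by
    refine setIntegral_congr_fun measurableSet_Ioc (fun x hx => ?_)
    have hx0 : ¬ x < 0 := not_lt.mpr (le_of_lt hx.1)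
    have hle : 1 - vB * lA / (vA * lB) + x * lA / vA ≤ 1 := by
      have : x * lA / vA ≤ vB * lA / (vA * lB) := by
        rw [div_le_div_iff₀ (by positivity) (by positivity)]
        have hxr : x ≤ r := hx.2
        calc x * lA * (vA * lB) ≤ r * lA * (vA * lB) := by
              apply mul_le_mul_of_nonneg_right (mul_le_mul_of_nonneg_right hxr hlA.le)
                (by positivity)
          _ = vB * lA * vA := by rw [hr]; field_simp
      linarith
    simp only [FBstar, hx0, if_false, hi, if_true]
    rw [min_eq_left (by rw [mul_div_assoc] at hle ⊢; exact hle)]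
    ring
  rw [hcongr]
  rw [← intervalIntegral.integral_of_le hr0.le]
  rw [intervalIntegral.integral_add (intervalIntegrable_const)
    ((intervalIntegral.intervalIntegrable_id).mul_const _)]
  rw [intervalIntegral.integral_const, intervalIntegral.integral_mul_const, integral_id]
  have hvAlB : vA * lB ≠ 0 := by positivity
  have h1 : vB * lA / (vA * lB) = γ * vB / vA := by
    rw [hrel]; field_simp
  rw [h1]
  rw [hc, hr, hrel]
  simp only [smul_eq_mul]
  field_simp
  ring

lemma integral_not_mem {n : ℕ} (XA XB : ℝ) (wA wB : Fin n → ℝ) (γ : ℝ) (i : Fin n)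
    (hvA : 0 < nv wA i) (hvB : 0 < nv wB i)
    (hlA : 0 < lamA XB wA wB γ) (hlB : 0 < lamB XA wA wB γ)
    (hrel : lamA XB wA wB γ = γ * lamB XA wA wB γ) (hγ : 0 < γ)
    (hi : i ∉ OmegaA wA wB γ)
    (μ : Measure ℝ) [IsProbabilityMeasure μ]
    (hcdf : ∀ x, μ (Set.Iic x) = ENNReal.ofReal (FAstar XA XB wA wB γ i x)) :
    ∫ x in Set.Ici (0:ℝ), FBstar XA XB wA wB γ i x ∂μ
      = nv wA i / (2 * γ * nv wB i) := by
  set vA := nv wA i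
  set vB := nv wB i
  set lA := lamA XB wA wB γ
  set lB := lamB XA wA wB γ
  set r := vA / lA with hr
  set c := lB / vB with hc
  set d := vA * lB / (vB * lA) with hd
  have hr0 : 0 < r := div_pos hvA hlA
  have hc0 : 0 < c := div_pos hlB hvB
  have hd0 : 0 < d := div_pos (by positivity) (by positivity)
  have hcr : c * r = d := by rw [hc, hr, hd]; field_simp
  have hγge : vA / vB ≤ γ := by
    have := hi
    simp only [OmegaA, Finset.mem_filter, Finset.mem_univ, true_and, not_lt] at this
    exact this
  have hd1 : d ≤ 1 := by
    rw [hd, hrel, div_le_one (by positivity)]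
    calc vA * lB ≤ (γ * vB) * lB := by
          apply mul_le_mul_of_nonneg_right _ hlB.le
          rw [div_le_iff₀ hvB] at hγge; linarith
      _ = vB * (γ * lB) := by ring
  have hμ : μ = ENNReal.ofReal (1 - d) • Measure.dirac 0
      + ENNReal.ofReal c • volume.restrict (Set.Ioc 0 r) := by
    refine Measure.ext_of_Iic μ _ (fun x => ?_)
    rw [hcdf, Measure.add_apply, Measure.smul_apply, Measure.smul_apply,
      Measure.restrict_apply measurableSet_Iic, Set.inter_comm, Set.Ioc_inter_Iic,
      Measure.dirac_apply' _ measurableSet_Iic, smul_eq_mul, smul_eq_mul]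
    rcases lt_or_ge x 0 with hx | hx
    · have h1 : min r x < 0 := lt_of_le_of_lt (min_le_right _ _) hx
      have h2 : (0:ℝ) ∉ Set.Iic x := by simp [not_le.mpr hx]
      rw [Real.volume_Ioc, Set.indicator_of_notMem h2]
      simp [FAstar, hx, h1.le, hx.le]
    · have h2 : (0:ℝ) ∈ Set.Iic x := by simpa using hx
      rw [Real.volume_Ioc, Set.indicator_of_mem h2]
      have hFA : FAstar XA XB wA wB γ i x = min (1 - vA * lB / (vB * lA) + x * lB / vB) 1 := by
        simp [FAstar, not_lt.mpr hx, hi]; rfl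
      rw [hFA, Pi.one_apply, mul_one, sub_zero, ← ENNReal.ofReal_mul hc0.le,
        ← ENNReal.ofReal_add (by linarith) (by positivity)]
      congr 1
      have hxl : x * lB / vB = c * x := by rw [hc]; ring
      have hdd : vA * lB / (vB * lA) = d := hd.symm
      rw [hdd, hxl]
      rcases le_total x r with hxr | hxr
      · have hcx : c * x ≤ d := by
          rw [← hcr]; exact mul_le_mul_of_nonneg_left hxr hc0.le
        rw [min_eq_right hxr, min_eq_left (by linarith)]
      · have hcx : d ≤ c * x := by
          rw [← hcr]; exact mul_le_mul_of_nonneg_left hxr hc0.le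
        rw [min_eq_left hxr, hcr, min_eq_right (by linarith)]
        ring
  rw [hμ]
  have hres : (ENNReal.ofReal (1 - d) • Measure.dirac 0
      + ENNReal.ofReal c • volume.restrict (Set.Ioc 0 r)).restrict (Set.Ici 0)
      = ENNReal.ofReal (1 - d) • Measure.dirac 0
        + ENNReal.ofReal c • volume.restrict (Set.Ioc 0 r) := by
    rw [Measure.restrict_add, Measure.restrict_smul, Measure.restrict_smul,
      Measure.restrict_restrict measurableSet_Ici,
      (by exact Set.inter_eq_self_of_subset_right (fun x hx => le_of_lt hx.1) :
        Set.Ici (0:ℝ) ∩ Set.Ioc 0 r = Set.Ioc 0 r)]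
    congr 1
    congr 1
    apply Measure.restrict_eq_self_of_ae_mem
    exact (ae_dirac_iff measurableSet_Ici).mpr (le_refl 0)
  rw [hres]
  set f := fun x => FBstar XA XB wA wB γ i x with hf
  have hfmeas : Measurable f := by
    rw [hf]
    unfold FBstar
    refine Measurable.ite measurableSet_Iio measurable_const ?_
    refine Measurable.ite (MeasurableSet.const _) ?_ ?_
    · exact ((measurable_const.sub measurable_const).add
        ((measurable_id.mul_const _).div_const _)).min measurable_const
    · exact ((measurable_id.mul_const _).div_const _).min measurable_const
  have hfeq : ∀ x, f x = if x < 0 then 0 else min (x * (lA / vA)) 1 := by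
    intro x
    simp only [hf, FBstar]
    rcases lt_or_ge x 0 with h | h
    · rw [if_pos h, if_pos h]
    · rw [if_neg (not_lt.mpr h), if_neg (not_lt.mpr h), if_neg hi, mul_div_assoc]
  have hbound : ∀ x, ‖f x‖ ≤ 1 := by
    intro x
    rw [hfeq x, Real.norm_eq_abs, abs_le]
    constructor
    · split_ifs with h1
      · norm_num
      · have hx : (0:ℝ) ≤ x := not_lt.mp h1
        have h0 : (0:ℝ) ≤ x * (lA / vA) := mul_nonneg hx (by positivity)
        exact le_trans (show (-1:ℝ) ≤ 0 by norm_num) (le_min h0 (by norm_num))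
    · split_ifs with h1
      · norm_num
      · exact min_le_right _ _
  have hint1 : Integrable f (ENNReal.ofReal (1 - d) • Measure.dirac 0) := by
    refine Integrable.smul_measure ?_ ENNReal.ofReal_ne_top
    refine Integrable.mono' (integrable_const 1) hfmeas.aestronglyMeasurable ?_
    exact ae_of_all _ hbound
  have hint2 : Integrable f (ENNReal.ofReal c • volume.restrict (Set.Ioc 0 r)) := by
    refine Integrable.smul_measure ?_ ENNReal.ofReal_ne_top
    refine Integrable.mono' ?_ hfmeas.aestronglyMeasurable (ae_of_all _ hbound)
    refine integrableOn_const (lt_top_iff_ne_top.mp ?_)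
    rw [Real.volume_Ioc]
    exact ENNReal.ofReal_lt_top
  rw [integral_add_measure hint1 hint2]
  rw [integral_smul_measure, integral_smul_measure, integral_dirac]
  have hf0 : f 0 = 0 := by
    rw [hfeq 0]
    norm_num
  rw [hf0]
  have hcongr : ∫ x in Set.Ioc 0 r, f x = ∫ x in Set.Ioc 0 r, x * (lA / vA) := by
    refine setIntegral_congr_fun measurableSet_Ioc (fun x hx => ?_)
    have hx0 : ¬ x < 0 := not_lt.mpr (le_of_lt hx.1)
    rw [hfeq x, if_neg hx0, min_eq_left]
    rw [← mul_div_assoc, div_le_one hvA]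
    calc x * lA ≤ r * lA := mul_le_mul_of_nonneg_right hx.2 hlA.le
      _ = vA := by rw [hr]; field_simp
  rw [hcongr, ← intervalIntegral.integral_of_le hr0.le,
    intervalIntegral.integral_mul_const, integral_id]
  rw [ENNReal.toReal_ofReal hc0.le]
  rw [hc, hr, hrel]
  simp only [smul_eq_mul]
  field_simp
  ring

/-- Evaluation of Σ_i v^A_i ∫ F_{B*_i} dμ_{A*_i}. -/
theorem stmt6 (n : ℕ) (hn : 1 ≤ n) (XA XB : ℝ) (hXA : 0 < XA) (hXAB : XA ≤ XB)
    (wA wB : Fin n → ℝ) (hwA : ∀ i, 0 < wA i) (hwB : ∀ i, 0 < wB i)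
    (γ : ℝ) (hγ : 0 < γ) (heq : Eq2 XA XB wA wB γ)
    (μA : Fin n → Measure ℝ) (hprob : ∀ i, IsProbabilityMeasure (μA i))
    (hcdf : ∀ i x, μA i (Set.Iic x) = ENNReal.ofReal (FAstar XA XB wA wB γ i x)) :
    ∑ i, nv wA i * ∫ x in Set.Ici (0 : ℝ), FBstar XA XB wA wB γ i x ∂(μA i)
      = ∑ i ∈ OmegaA wA wB γ, nv wA i * (1 - γ * nv wB i / (2 * nv wA i))
        + ∑ i ∈ (OmegaA wA wB γ)ᶜ, (nv wA i) ^ 2 / (2 * γ * nv wB i) := by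
  have hXB : 0 < XB := lt_of_lt_of_le hXA hXAB
  have hvA := nv_pos hn wA hwA
  have hvB := nv_pos hn wB hwB
  have hlA : 0 < lamA XB wA wB γ := lamA_pos hn XB hXB wA wB hwA hwB γ hγ
  have hlB : 0 < lamB XA wA wB γ := lamB_pos hn XA hXA wA wB hwA hwB γ hγ
  have hrel : lamA XB wA wB γ = γ * lamB XA wA wB γ :=
    lam_ratio XA XB hXA hXB wA wB γ hγ hlB heq
  rw [← Finset.sum_add_sum_compl (OmegaA wA wB γ)
    (fun i => nv wA i * ∫ x in Set.Ici (0 : ℝ), FBstar XA XB wA wB γ i x ∂(μA i))]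
  congr 1
  · refine Finset.sum_congr rfl (fun i hi => ?_)
    haveI := hprob i
    rw [integral_mem XA XB wA wB γ i (hvA i) (hvB i) hlA hlB hrel hγ hi (μA i) (hcdf i)]
  · refine Finset.sum_congr rfl (fun i hi => ?_)
    haveI := hprob i
    rw [integral_not_mem XA XB wA wB γ i (hvA i) (hvB i) hlA hlB hrel hγ
      (Finset.mem_compl.mp hi) (μA i) (hcdf i)]
    field_simp
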